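/- The EPIC canonicalization is invariant to potential shaping: if R'(s,a,s') = R(s,a,s') + γΦ(s') − Φ(s) for a bounded potential Φ, then C(R') = C(R), where C(R)(s,a,s') = R(s,a,s') + E[γR(s',A,S') − R(s,A,S') − γR(S,A,S')] with S, A, S' independent random variables over states and actions. -/

import Mathlib

open MeasureTheory

/-- The EPIC canonicalization of a reward function. -/
noncomputable def epicC {S A : Type*} [MeasurableSpace S] [MeasurableSpace A]
    (μS : Measure S) (μA : Measure A) (γ : ℝ) (R : S → A → S → ℝ) : S → A → S → ℝ :=
  fun s _a s' =>
    R s _a s' + (∫ a', (∫ x', γ * R s' a' x' ∂μS) ∂μA)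
      - (∫ a', (∫ x', R s a' x' ∂μS) ∂μA)
      - γ * (∫ x, (∫ a', (∫ x', R x a' x' ∂μS) ∂μA) ∂μS)

/-- The EPIC canonicalization is invariant to potential shaping. -/
theorem epic_invariant_to_shaping {S A : Type*} [MeasurableSpace S] [MeasurableSpace A]
    (μS : Measure S) (μA : Measure A)
    [IsProbabilityMeasure μS] [IsProbabilityMeasure μA]
    (γ : ℝ) (hγ : γ ∈ Set.Icc (0 : ℝ) 1)
    (R : S → A → S → ℝ)
    (hRm : Measurable fun p : S × A × S => R p.1 p.2.1 p.2.2)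
    (hRb : ∃ M, ∀ s a s', |R s a s'| ≤ M)
    (Φ : S → ℝ) (hΦm : Measurable Φ) (hΦb : ∃ M, ∀ s, |Φ s| ≤ M)
    (R' : S → A → S → ℝ)
    (hR' : ∀ s a s', R' s a s' = R s a s' + γ * Φ s' - Φ s) :
    epicC μS μA γ R' = epicC μS μA γ R := by
  obtain ⟨M, hM⟩ := hRb
  obtain ⟨N, hN⟩ := hΦb
  have hMS : ∀ s a, Measurable fun x' => R s a x' := fun s a =>
    hRm.comp (measurable_const.prodMk (measurable_const.prodMk measurable_id))
  have hIR : ∀ s a, Integrable (fun x' => R s a x') μS := fun s a =>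
    ⟨(hMS s a).aestronglyMeasurable,
      HasFiniteIntegral.of_bounded (C := M) (ae_of_all _ fun x => by
        simpa using hM s a x)⟩
  have hIΦ : Integrable Φ μS :=
    ⟨hΦm.aestronglyMeasurable,
      HasFiniteIntegral.of_bounded (C := N) (ae_of_all _ fun x => by simpa using hN x)⟩
  have hGm : StronglyMeasurable (fun p : S × A => ∫ x', R p.1 p.2 x' ∂μS) := by
    have hmf : Measurable (fun q : (S × A) × S => R q.1.1 q.1.2 q.2) :=
      hRm.comp ((measurable_fst.comp measurable_fst).prodMk
        ((measurable_snd.comp measurable_fst).prodMk measurable_snd))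
    exact hmf.stronglyMeasurable.integral_prod_right'
  have hGbound : ∀ (s : S) (a : A), |∫ x', R s a x' ∂μS| ≤ M := by
    intro s a
    have := norm_integral_le_of_norm_le_const (μ := μS)
      (f := fun x' => R s a x') (C := M) (ae_of_all _ fun x => by simpa using hM s a x)
    simpa [measure_univ] using this
  have hIG : ∀ s : S, Integrable (fun a' => ∫ x', R s a' x' ∂μS) μA := fun s =>
    ⟨(hGm.comp_measurable (measurable_const.prodMk measurable_id)).aestronglyMeasurable,
      HasFiniteIntegral.of_bounded (C := M) (ae_of_all _ fun a => by
        simpa using hGbound s a)⟩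
  have hJm : StronglyMeasurable (fun x : S => ∫ a', ∫ x', R x a' x' ∂μS ∂μA) :=
    hGm.integral_prod_right'
  have hJbound : ∀ x : S, |∫ a', ∫ x', R x a' x' ∂μS ∂μA| ≤ M := by
    intro x
    have := norm_integral_le_of_norm_le_const (μ := μA)
      (f := fun a' => ∫ x', R x a' x' ∂μS) (C := M)
      (ae_of_all _ fun a => by simpa using hGbound x a)
    simpa [measure_univ] using this
  have hIJ : Integrable (fun x : S => ∫ a', ∫ x', R x a' x' ∂μS ∂μA) μS :=
    ⟨hJm.aestronglyMeasurable,
      HasFiniteIntegral.of_bounded (C := M) (ae_of_all _ fun x => by simpa using hJbound x)⟩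
  set IΦ := ∫ x, Φ x ∂μS with hIΦdef
  have h1 : ∀ (s0 : S) (a0 : A),
      (∫ x', γ * R' s0 a0 x' ∂μS)
        = γ * (∫ x', R s0 a0 x' ∂μS) + (γ * γ) * IΦ - γ * Φ s0 := by
    intro s0 a0
    have heq : (fun x' => γ * R' s0 a0 x')
        = fun x' => (γ * R s0 a0 x' + (γ * γ) * Φ x') - γ * Φ s0 := by
      funext x'; rw [hR']; ring
    rw [heq, integral_sub
        (show Integrable (fun x' => γ * R s0 a0 x' + (γ * γ) * Φ x') μS from
          ((hIR s0 a0).const_mul γ).add (hIΦ.const_mul (γ * γ)))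
        (integrable_const _),
      integral_add ((hIR s0 a0).const_mul γ) (hIΦ.const_mul (γ * γ)),
      integral_const_mul _ _, integral_const_mul _ _, integral_const]
    simp [measure_univ, hIΦdef]
  have h2 : ∀ (s0 : S) (a0 : A),
      (∫ x', R' s0 a0 x' ∂μS)
        = (∫ x', R s0 a0 x' ∂μS) + γ * IΦ - Φ s0 := by
    intro s0 a0
    have heq : (fun x' => R' s0 a0 x')
        = fun x' => (R s0 a0 x' + γ * Φ x') - Φ s0 := by
      funext x'; rw [hR']
    rw [heq, integral_sub
        (show Integrable (fun x' => R s0 a0 x' + γ * Φ x') μS from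
          (hIR s0 a0).add (hIΦ.const_mul γ))
        (integrable_const _),
      integral_add (hIR s0 a0) (hIΦ.const_mul γ), integral_const_mul _ _, integral_const]
    simp [measure_univ, hIΦdef]
  have t1 : ∀ s0 : S,
      (∫ a', ∫ x', γ * R' s0 a' x' ∂μS ∂μA)
        = γ * (∫ a', ∫ x', R s0 a' x' ∂μS ∂μA) + (γ * γ) * IΦ - γ * Φ s0 := by
    intro s0
    simp_rw [h1 s0]
    rw [integral_sub
        (show Integrable (fun a' => γ * (∫ x', R s0 a' x' ∂μS) + (γ * γ) * IΦ) μA from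
          ((hIG s0).const_mul γ).add (integrable_const _))
        (integrable_const _),
      integral_add ((hIG s0).const_mul γ) (integrable_const _),
      integral_const_mul _ _, integral_const, integral_const]
    simp [measure_univ]
  have t2 : ∀ s0 : S,
      (∫ a', ∫ x', R' s0 a' x' ∂μS ∂μA)
        = (∫ a', ∫ x', R s0 a' x' ∂μS ∂μA) + γ * IΦ - Φ s0 := by
    intro s0
    simp_rw [h2 s0]
    rw [integral_sub
        (show Integrable (fun a' => (∫ x', R s0 a' x' ∂μS) + γ * IΦ) μA from
          (hIG s0).add (integrable_const _))
        (integrable_const _),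
      integral_add (hIG s0) (integrable_const _), integral_const, integral_const]
    simp [measure_univ]
  have t3 : (∫ x, ∫ a', ∫ x', R' x a' x' ∂μS ∂μA ∂μS)
      = (∫ x, ∫ a', ∫ x', R x a' x' ∂μS ∂μA ∂μS) + γ * IΦ - IΦ := by
    simp_rw [t2]
    rw [integral_sub
        (show Integrable (fun x => (∫ a', ∫ x', R x a' x' ∂μS ∂μA) + γ * IΦ) μS from
          hIJ.add (integrable_const _))
        hIΦ,
      integral_add hIJ (integrable_const _), integral_const]
    simp [measure_univ, hIΦdef]
  have hc : ∀ s0 : S,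
      (∫ a', ∫ x', γ * R s0 a' x' ∂μS ∂μA) = γ * ∫ a', ∫ x', R s0 a' x' ∂μS ∂μA := by
    intro s0
    simp_rw [integral_const_mul _ _]
  funext s a s'
  simp only [epicC]
  rw [t1 s', t2 s, t3, hR' s a s', hc s']
  ring
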